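/- Let (𝒪,𝒜,T,e,≼) be a Direct Preference Process whose restriction of ≼ to Dist(Ω^e) is a total consistent preorder. For any two ≼-optimal policies π and π' and any attainable history h_t of length less than T, the optimal action sets coincide: 𝒜*_π(h_t) = 𝒜*_{π'}(h_t), where 𝒜*_π(h_t) = {a : D^π(h_t·a) ≽ D^π(h_t·a') for all a' ∈ 𝒜}. -/

import Mathlib

set_option linter.unusedSectionVars false

open Finset

/-- A history: an initial observation together with a list of action-observation pairs. -/
abbrev Hist (O A : Type*) := O × List (A × O)

/-- The length (time index) of a history. -/
def hlen {O A : Type*} (h : Hist O A) : ℕ := h.2.length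

/-- Append an action-observation pair to a history. -/
def hext {O A : Type*} (h : Hist O A) (a : A) (o : O) : Hist O A :=
  (h.1, h.2 ++ [(a, o)])

/-- The length-`t` prefix of a history/trajectory. -/
def hpre {O A : Type*} (h : Hist O A) (t : ℕ) : Hist O A := (h.1, h.2.take t)

section DPP

variable {O A : Type*} [Fintype O] [Fintype A] [DecidableEq O] [DecidableEq A]

/-- The finite set of all length-`T` histories (trajectories). -/
def trajFinset (O A : Type*) [Fintype O] [Fintype A] [DecidableEq O] [DecidableEq A]
    (T : ℕ) : Finset (Hist O A) :=
  Finset.image (fun p : O × (Fin T → A × O) => ((p.1, List.ofFn p.2) : Hist O A))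
    Finset.univ

/-- `π` is a policy: a distribution over actions for each history. -/
def IsPolicy (π : Hist O A → A → ℝ) : Prop :=
  ∀ h, (∀ a, 0 ≤ π h a) ∧ ∑ a, π h a = 1

/-- `(ρ0, ρ)` is an environment: an initial observation distribution and
history-dependent transition probabilities. -/
def IsEnv (ρ0 : O → ℝ) (ρ : Hist O A → A → O → ℝ) : Prop :=
  ((∀ o, 0 ≤ ρ0 o) ∧ ∑ o, ρ0 o = 1) ∧
    ∀ h a, (∀ o, 0 ≤ ρ h a o) ∧ ∑ o, ρ h a o = 1

/-- `Dpi ρ π n h` : the distribution over trajectories induced by starting at `h`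
(with `n` steps remaining) and following policy `π` in environment `ρ`. -/
noncomputable def Dpi (ρ : Hist O A → A → O → ℝ) (π : Hist O A → A → ℝ) :
    ℕ → Hist O A → Hist O A → ℝ
  | 0, h, ω => if ω = h then 1 else 0
  | n + 1, h, ω => ∑ a, π h a * ∑ o, ρ h a o * Dpi ρ π n (hext h a o) ω

/-- `D^π(h)` with horizon `T`. -/
noncomputable def DpiH (T : ℕ) (ρ : Hist O A → A → O → ℝ) (π : Hist O A → A → ℝ)
    (h : Hist O A) : Hist O A → ℝ :=
  Dpi ρ π (T - hlen h) h

/-- `D^π(h · a)` : take action `a` at `h`, then follow `π`. -/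
noncomputable def DpiA (T : ℕ) (ρ : Hist O A → A → O → ℝ) (π : Hist O A → A → ℝ)
    (h : Hist O A) (a : A) : Hist O A → ℝ :=
  fun ω => ∑ o, ρ h a o * Dpi ρ π (T - hlen h - 1) (hext h a o) ω

/-- Attainable histories in environment `(ρ0, ρ)`. -/
inductive Attainable (ρ0 : O → ℝ) (ρ : Hist O A → A → O → ℝ) : Hist O A → Prop
  | base (o : O) : 0 < ρ0 o → Attainable ρ0 ρ (o, ([] : List (A × O)))
  | step (h : Hist O A) (a : A) (o : O) :
      Attainable ρ0 ρ h → 0 < ρ h a o → Attainable ρ0 ρ (hext h a o)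

/-- A distribution over trajectories (length-`T` histories). -/
def IsTrajDist (T : ℕ) (D : Hist O A → ℝ) : Prop :=
  (∀ ω, 0 ≤ D ω) ∧ (∀ ω, D ω ≠ 0 → hlen ω = T) ∧
    ∑ ω ∈ trajFinset O A T, D ω = 1

/-- A distribution over the attainable trajectories `Ω^e`. -/
def IsAttDist (T : ℕ) (ρ0 : O → ℝ) (ρ : Hist O A → A → O → ℝ)
    (D : Hist O A → ℝ) : Prop :=
  IsTrajDist T D ∧ ∀ ω, D ω ≠ 0 → Attainable ρ0 ρ ω

/-- Pointwise convex combination. -/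
def mix {X : Type*} (α : ℝ) (A B : X → ℝ) : X → ℝ :=
  fun x => α * A x + (1 - α) * B x

/-- The restriction of `R` to `Dist(Ω^e)` is a total consistent preorder. -/
def RestrTotalConsistentPreorder (T : ℕ) (ρ0 : O → ℝ)
    (ρ : Hist O A → A → O → ℝ) (R : (Hist O A → ℝ) → (Hist O A → ℝ) → Prop) : Prop :=
  (∀ D, IsAttDist T ρ0 ρ D → R D D) ∧
  (∀ D₁ D₂ D₃, IsAttDist T ρ0 ρ D₁ → IsAttDist T ρ0 ρ D₂ → IsAttDist T ρ0 ρ D₃ →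
    R D₁ D₂ → R D₂ D₃ → R D₁ D₃) ∧
  (∀ D₁ D₂, IsAttDist T ρ0 ρ D₁ → IsAttDist T ρ0 ρ D₂ → (R D₁ D₂ ∨ R D₂ D₁)) ∧
  (∀ α : ℝ, 0 < α → α < 1 → ∀ D₁ D₂ D₃, IsAttDist T ρ0 ρ D₁ →
    IsAttDist T ρ0 ρ D₂ → IsAttDist T ρ0 ρ D₃ →
    R D₁ D₂ → R (mix α D₁ D₃) (mix α D₂ D₃))

/-- `π` is a `≼`-optimal policy. -/
def OptimalPolicy (T : ℕ) (ρ0 : O → ℝ) (ρ : Hist O A → A → O → ℝ)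
    (R : (Hist O A → ℝ) → (Hist O A → ℝ) → Prop) (π : Hist O A → A → ℝ) : Prop :=
  ∀ h, Attainable ρ0 ρ h → hlen h ≤ T →
    ∀ π', IsPolicy π' → R (DpiH T ρ π' h) (DpiH T ρ π h)

/-- The optimal action set of policy `π` at history `h`. -/
def OptActions (T : ℕ) (ρ : Hist O A → A → O → ℝ)
    (R : (Hist O A → ℝ) → (Hist O A → ℝ) → Prop) (π : Hist O A → A → ℝ)
    (h : Hist O A) : Set A :=
  {a | ∀ a', R (DpiA T ρ π h a') (DpiA T ρ π h a)}

end DPP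

section Aux

variable {O A : Type*} [Fintype O] [Fintype A] [DecidableEq O] [DecidableEq A]
variable {ρ0 : O → ℝ} {ρ : Hist O A → A → O → ℝ} {π : Hist O A → A → ℝ} {T : ℕ}

lemma hlen_hext (h : Hist O A) (a : A) (o : O) : hlen (hext h a o) = hlen h + 1 := by
  simp [hlen, hext]

lemma mem_trajFinset (ω : Hist O A) : ω ∈ trajFinset O A T ↔ hlen ω = T := by
  constructor
  · intro hω
    simp only [trajFinset, Finset.mem_image] at hω
    obtain ⟨p, -, rfl⟩ := hω
    simp [hlen]
  · intro hω
    obtain ⟨o, l⟩ := ω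
    simp only [hlen] at hω
    subst hω
    simp only [trajFinset, Finset.mem_image]
    exact ⟨(o, l.get), Finset.mem_univ _, by simp⟩

lemma dpi_nonneg (henv : IsEnv ρ0 ρ) (hπ : IsPolicy π) :
    ∀ (n : ℕ) (h ω : Hist O A), 0 ≤ Dpi ρ π n h ω
  | 0, h, ω => by
    simp only [Dpi]
    split <;> norm_num
  | n + 1, h, ω => by
    simp only [Dpi]
    refine Finset.sum_nonneg fun a _ => mul_nonneg ((hπ h).1 a) ?_
    exact Finset.sum_nonneg fun o _ =>
      mul_nonneg ((henv.2 h a).1 o) (dpi_nonneg henv hπ n _ ω)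

lemma dpi_len : ∀ (n : ℕ) (h ω : Hist O A), Dpi ρ π n h ω ≠ 0 → hlen ω = hlen h + n
  | 0, h, ω => by
    simp only [Dpi]
    split
    · rename_i h'; subst h'; simp
    · simp
  | n + 1, h, ω => by
    intro hne
    obtain ⟨a, -, ha⟩ := Finset.exists_ne_zero_of_sum_ne_zero hne
    have h2 : (∑ o, ρ h a o * Dpi ρ π n (hext h a o) ω) ≠ 0 := right_ne_zero_of_mul ha
    obtain ⟨o, -, ho⟩ := Finset.exists_ne_zero_of_sum_ne_zero h2
    have := dpi_len n (hext h a o) ω (right_ne_zero_of_mul ho)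
    rw [hlen_hext] at this
    omega

lemma dpi_att (henv : IsEnv ρ0 ρ) :
    ∀ (n : ℕ) (h ω : Hist O A), Attainable ρ0 ρ h → Dpi ρ π n h ω ≠ 0 → Attainable ρ0 ρ ω
  | 0, h, ω => by
    intro hatt
    simp only [Dpi]
    split
    · rename_i h'; subst h'; exact fun _ => hatt
    · simp
  | n + 1, h, ω => by
    intro hatt hne
    obtain ⟨a, -, ha⟩ := Finset.exists_ne_zero_of_sum_ne_zero hne
    have h2 : (∑ o, ρ h a o * Dpi ρ π n (hext h a o) ω) ≠ 0 := right_ne_zero_of_mul ha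
    obtain ⟨o, -, ho⟩ := Finset.exists_ne_zero_of_sum_ne_zero h2
    have hρ : 0 < ρ h a o := lt_of_le_of_ne ((henv.2 h a).1 o) (Ne.symm (left_ne_zero_of_mul ho))
    exact dpi_att henv n (hext h a o) ω (Attainable.step h a o hatt hρ)
      (right_ne_zero_of_mul ho)

lemma dpi_sum (henv : IsEnv ρ0 ρ) (hπ : IsPolicy π) (n : ℕ) (h : Hist O A)
    (hn : hlen h + n = T) : ∑ ω ∈ trajFinset O A T, Dpi ρ π n h ω = 1 := by
  induction n generalizing h with
  | zero =>
    simp only [Dpi, Finset.sum_ite_eq']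
    rw [if_pos ((mem_trajFinset h).2 (by omega))]
  | succ n ih =>
    simp only [Dpi]
    rw [Finset.sum_comm]
    have key : ∀ a : A,
        (∑ ω ∈ trajFinset O A T, π h a * ∑ o, ρ h a o * Dpi ρ π n (hext h a o) ω)
          = π h a := by
      intro a
      rw [← Finset.mul_sum, Finset.sum_comm]
      have inner : ∀ o : O,
          (∑ ω ∈ trajFinset O A T, ρ h a o * Dpi ρ π n (hext h a o) ω) = ρ h a o := by
        intro o
        rw [← Finset.mul_sum, ih (hext h a o) (by rw [hlen_hext]; omega), mul_one]
      rw [Finset.sum_congr rfl fun o _ => inner o, (henv.2 h a).2, mul_one]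
    rw [Finset.sum_congr rfl fun a _ => key a, (hπ h).2]

lemma isAttDist_dpi (henv : IsEnv ρ0 ρ) (hπ : IsPolicy π) (n : ℕ) (h : Hist O A)
    (hatt : Attainable ρ0 ρ h) (hn : hlen h + n = T) :
    IsAttDist T ρ0 ρ (Dpi ρ π n h) :=
  ⟨⟨dpi_nonneg henv hπ n h, fun ω hω => by rw [dpi_len n h ω hω]; omega,
      dpi_sum henv hπ n h hn⟩,
    fun ω hω => dpi_att henv n h ω hatt hω⟩

lemma isAttDist_sum_mix {ι : Type*} (s : Finset ι) (w : ι → ℝ)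
    (D : ι → Hist O A → ℝ) (hw0 : ∀ i ∈ s, 0 ≤ w i) (hw1 : ∑ i ∈ s, w i = 1)
    (hD : ∀ i ∈ s, w i ≠ 0 → IsAttDist T ρ0 ρ (D i)) :
    IsAttDist T ρ0 ρ (fun ω => ∑ i ∈ s, w i * D i ω) := by
  have hterm : ∀ ω i, i ∈ s → w i ≠ 0 → D i ω ≠ 0 →
      hlen ω = T ∧ Attainable ρ0 ρ ω := by
    intro ω i hi hwi hDi
    exact ⟨(hD i hi hwi).1.2.1 ω hDi, (hD i hi hwi).2 ω hDi⟩
  refine ⟨⟨fun ω => Finset.sum_nonneg fun i hi => ?_, fun ω hω => ?_, ?_⟩, fun ω hω => ?_⟩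
  · rcases eq_or_ne (w i) 0 with h | h
    · simp [h]
    · exact mul_nonneg (hw0 i hi) ((hD i hi h).1.1 ω)
  · obtain ⟨i, hi, hne⟩ := Finset.exists_ne_zero_of_sum_ne_zero hω
    exact (hterm ω i hi (left_ne_zero_of_mul hne) (right_ne_zero_of_mul hne)).1
  · rw [Finset.sum_comm]
    rw [← hw1]
    refine Finset.sum_congr rfl fun i hi => ?_
    rcases eq_or_ne (w i) 0 with h | h
    · simp [h]
    · rw [← Finset.mul_sum, (hD i hi h).1.2.2, mul_one]
  · obtain ⟨i, hi, hne⟩ := Finset.exists_ne_zero_of_sum_ne_zero hω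
    exact (hterm ω i hi (left_ne_zero_of_mul hne) (right_ne_zero_of_mul hne)).2

lemma isAttDist_mix {α : ℝ} {Da Db : Hist O A → ℝ} (h0 : 0 ≤ α) (h1 : α ≤ 1)
    (hA : IsAttDist T ρ0 ρ Da) (hB : IsAttDist T ρ0 ρ Db) :
    IsAttDist T ρ0 ρ (mix α Da Db) := by
  refine ⟨⟨fun ω => ?_, fun ω hω => ?_, ?_⟩, fun ω hω => ?_⟩
  · exact add_nonneg (mul_nonneg h0 (hA.1.1 ω)) (mul_nonneg (by linarith) (hB.1.1 ω))
  · by_contra hne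
    have h1' : Da ω = 0 := by
      by_contra hx; exact hne (hA.1.2.1 ω hx)
    have h2' : Db ω = 0 := by
      by_contra hx; exact hne (hB.1.2.1 ω hx)
    exact hω (by simp [mix, h1', h2'])
  · simp only [mix]
    rw [Finset.sum_add_distrib, ← Finset.mul_sum, ← Finset.mul_sum,
      hA.1.2.2, hB.1.2.2]
    ring
  · by_contra hne
    have h1' : Da ω = 0 := by
      by_contra hx; exact hne (hA.2 ω hx)
    have h2' : Db ω = 0 := by
      by_contra hx; exact hne (hB.2 ω hx)
    exact hω (by simp [mix, h1', h2'])

lemma R_sum_mix {R : (Hist O A → ℝ) → (Hist O A → ℝ) → Prop}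
    (hR : RestrTotalConsistentPreorder T ρ0 ρ R)
    {ι : Type*} [DecidableEq ι] (s : Finset ι) (w : ι → ℝ) (D E : ι → Hist O A → ℝ)
    (hw0 : ∀ i ∈ s, 0 ≤ w i) (hw1 : ∑ i ∈ s, w i = 1)
    (hD : ∀ i ∈ s, w i ≠ 0 → IsAttDist T ρ0 ρ (D i))
    (hE : ∀ i ∈ s, w i ≠ 0 → IsAttDist T ρ0 ρ (E i))
    (hDE : ∀ i ∈ s, w i ≠ 0 → R (D i) (E i)) :
    R (fun ω => ∑ i ∈ s, w i * D i ω) (fun ω => ∑ i ∈ s, w i * E i ω) := by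
  induction s using Finset.induction_on generalizing w with
  | empty => simp at hw1
  | insert _ _ hj =>
    rename_i j s ih
    rw [Finset.sum_insert hj] at hw1
    simp only [Finset.sum_insert hj]
    have hw0' : ∀ i ∈ s, 0 ≤ w i := fun i hi => hw0 i (Finset.mem_insert_of_mem hi)
    have hD' : ∀ i ∈ s, w i ≠ 0 → IsAttDist T ρ0 ρ (D i) :=
      fun i hi => hD i (Finset.mem_insert_of_mem hi)
    have hE' : ∀ i ∈ s, w i ≠ 0 → IsAttDist T ρ0 ρ (E i) :=
      fun i hi => hE i (Finset.mem_insert_of_mem hi)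
    have hDE' : ∀ i ∈ s, w i ≠ 0 → R (D i) (E i) :=
      fun i hi => hDE i (Finset.mem_insert_of_mem hi)
    rcases eq_or_ne (w j) 0 with hwj | hwj
    · simp only [hwj, zero_mul, zero_add]
      exact ih w hw0' (by linarith) hD' hE' hDE'
    have hjmem := Finset.mem_insert_self j s
    set β : ℝ := ∑ i ∈ s, w i with hβ
    have hβ0 : 0 ≤ β := Finset.sum_nonneg hw0'
    rcases eq_or_lt_of_le hβ0 with hβz | hβpos
    · -- all weights in s vanish, w j = 1
      have hallz : ∀ i ∈ s, w i = 0 := by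
        intro i hi
        have := (Finset.sum_eq_zero_iff_of_nonneg hw0').1 hβz.symm
        exact this i hi
      have hwj1 : w j = 1 := by
        have : β = 0 := hβz.symm
        rw [hβ] at this; linarith
      have eD : (fun ω => w j * D j ω + ∑ i ∈ s, w i * D i ω) = D j := by
        funext ω
        rw [Finset.sum_eq_zero fun i hi => by rw [hallz i hi, zero_mul], hwj1]
        ring
      have eE : (fun ω => w j * E j ω + ∑ i ∈ s, w i * E i ω) = E j := by
        funext ω
        rw [Finset.sum_eq_zero fun i hi => by rw [hallz i hi, zero_mul], hwj1]
        ring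
      rw [eD, eE]
      exact hDE j hjmem hwj
    · -- genuine mixture
      set α : ℝ := w j with hα
      have hα0 : 0 < α := lt_of_le_of_ne (hw0 j hjmem) (Ne.symm hwj)
      have hα1 : α < 1 := by rw [hα]; linarith
      have hβne : β ≠ 0 := ne_of_gt hβpos
      have hβval : β = 1 - α := by rw [hβ, hα]; linarith
      set D' : Hist O A → ℝ := fun ω => ∑ i ∈ s, (w i / β) * D i ω with hD'def
      set E' : Hist O A → ℝ := fun ω => ∑ i ∈ s, (w i / β) * E i ω with hE'def
      have hw0'' : ∀ i ∈ s, 0 ≤ w i / β := fun i hi => div_nonneg (hw0' i hi) hβ0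
      have hw1'' : ∑ i ∈ s, w i / β = 1 := by
        rw [← Finset.sum_div, ← hβ, div_self hβne]
      have hne'' : ∀ i ∈ s, w i / β ≠ 0 → w i ≠ 0 := by
        intro i hi hdiv hwz
        exact hdiv (by rw [hwz, zero_div])
      have attD' : IsAttDist T ρ0 ρ D' :=
        isAttDist_sum_mix s _ D hw0'' hw1'' (fun i hi hne => hD' i hi (hne'' i hi hne))
      have attE' : IsAttDist T ρ0 ρ E' :=
        isAttDist_sum_mix s _ E hw0'' hw1'' (fun i hi hne => hE' i hi (hne'' i hi hne))
      have rel' : R D' E' :=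
        ih (fun i => w i / β) hw0'' hw1'' (fun i hi hne => hD' i hi (hne'' i hi hne))
          (fun i hi hne => hE' i hi (hne'' i hi hne))
          (fun i hi hne => hDE' i hi (hne'' i hi hne))
      have attDj : IsAttDist T ρ0 ρ (D j) := hD j hjmem hwj
      have attEj : IsAttDist T ρ0 ρ (E j) := hE j hjmem hwj
      have sumD : (fun ω => w j * D j ω + ∑ i ∈ s, w i * D i ω) = mix α (D j) D' := by
        funext ω
        simp only [mix, hD'def, hα, Finset.mul_sum]
        congr 1
        refine Finset.sum_congr rfl fun i hi => ?_
        rw [hβval] at hβne ⊢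
        field_simp
        rw [hα]
      have sumE : (fun ω => w j * E j ω + ∑ i ∈ s, w i * E i ω) = mix α (E j) E' := by
        funext ω
        simp only [mix, hE'def, hα, Finset.mul_sum]
        congr 1
        refine Finset.sum_congr rfl fun i hi => ?_
        rw [hβval] at hβne ⊢
        field_simp
        rw [hα]
      rw [sumD, sumE]
      have step1 : R (mix α (D j) D') (mix α (E j) D') :=
        hR.2.2.2 α hα0 hα1 (D j) (E j) D' attDj attEj attD' (hDE j hjmem hwj)
      have mixswap : ∀ (X Y : Hist O A → ℝ), mix α X Y = mix (1 - α) Y X := by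
        intro X Y; funext ω; simp only [mix]; ring
      have step2 : R (mix α (E j) D') (mix α (E j) E') := by
        rw [mixswap (E j) D', mixswap (E j) E']
        exact hR.2.2.2 (1 - α) (by linarith) (by linarith) D' E' (E j)
          attD' attE' attEj rel'
      exact hR.2.1 _ _ _
        (isAttDist_mix (le_of_lt hα0) (le_of_lt hα1) attDj attD')
        (isAttDist_mix (le_of_lt hα0) (le_of_lt hα1) attEj attD')
        (isAttDist_mix (le_of_lt hα0) (le_of_lt hα1) attEj attE')
        step1 step2

lemma isAttDist_DpiA (henv : IsEnv ρ0 ρ) (hπ : IsPolicy π)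
    (h : Hist O A) (a : A) (hatt : Attainable ρ0 ρ h) (hlt : hlen h < T) :
    IsAttDist T ρ0 ρ (DpiA T ρ π h a) := by
  refine isAttDist_sum_mix Finset.univ (ρ h a)
    (fun o => Dpi ρ π (T - hlen h - 1) (hext h a o))
    (fun o _ => (henv.2 h a).1 o) (henv.2 h a).2 (fun o _ hne => ?_)
  have hρ : 0 < ρ h a o := lt_of_le_of_ne ((henv.2 h a).1 o) (Ne.symm hne)
  exact isAttDist_dpi henv hπ _ _ (Attainable.step h a o hatt hρ)
    (by rw [hlen_hext]; omega)

lemma dpiA_rel {R : (Hist O A → ℝ) → (Hist O A → ℝ) → Prop}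
    (hR : RestrTotalConsistentPreorder T ρ0 ρ R) (henv : IsEnv ρ0 ρ)
    {σ τ : Hist O A → A → ℝ} (hσ : IsPolicy σ) (hτ : IsPolicy τ)
    (hoptτ : OptimalPolicy T ρ0 ρ R τ)
    (h : Hist O A) (a : A) (hatt : Attainable ρ0 ρ h) (hlt : hlen h < T) :
    R (DpiA T ρ σ h a) (DpiA T ρ τ h a) := by
  refine R_sum_mix hR Finset.univ (ρ h a)
    (fun o => Dpi ρ σ (T - hlen h - 1) (hext h a o))
    (fun o => Dpi ρ τ (T - hlen h - 1) (hext h a o))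
    (fun o _ => (henv.2 h a).1 o) (henv.2 h a).2 ?_ ?_ ?_
  all_goals intro o _ hne
  all_goals have hρ : 0 < ρ h a o := lt_of_le_of_ne ((henv.2 h a).1 o) (Ne.symm hne)
  all_goals have hatt' : Attainable ρ0 ρ (hext h a o) := Attainable.step h a o hatt hρ
  all_goals have hlen' : hlen (hext h a o) + (T - hlen h - 1) = T := by rw [hlen_hext]; omega
  · exact isAttDist_dpi henv hσ _ _ hatt' hlen'
  · exact isAttDist_dpi henv hτ _ _ hatt' hlen'
  · have := hoptτ (hext h a o) hatt' (by omega) σ hσ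
    simpa only [DpiH, show T - hlen (hext h a o) = T - hlen h - 1 by rw [hlen_hext]; omega]
      using this

end Aux

/-- optimal action sets agree across optimal policies. -/
theorem optActions_eq_of_optimal {O A : Type*} [Fintype O] [Fintype A]
    [DecidableEq O] [DecidableEq A] [Nonempty O] [Nonempty A]
    (T : ℕ) (ρ0 : O → ℝ) (ρ : Hist O A → A → O → ℝ) (henv : IsEnv ρ0 ρ)
    (R : (Hist O A → ℝ) → (Hist O A → ℝ) → Prop)
    (hR : RestrTotalConsistentPreorder T ρ0 ρ R)
    (π π' : Hist O A → A → ℝ) (hπ : IsPolicy π) (hπ' : IsPolicy π')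
    (hopt : OptimalPolicy T ρ0 ρ R π) (hopt' : OptimalPolicy T ρ0 ρ R π')
    (h : Hist O A) (hatt : Attainable ρ0 ρ h) (hlt : hlen h < T) :
    OptActions T ρ R π h = OptActions T ρ R π' h := by
  have key : ∀ (σ τ : Hist O A → A → ℝ), IsPolicy σ → IsPolicy τ →
      OptimalPolicy T ρ0 ρ R σ → OptimalPolicy T ρ0 ρ R τ →
      OptActions T ρ R σ h ⊆ OptActions T ρ R τ h := by
    intro σ τ hσ hτ hoptσ hoptτ a ha b
    have e1 : R (DpiA T ρ τ h b) (DpiA T ρ σ h b) :=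
      dpiA_rel hR henv hτ hσ hoptσ h b hatt hlt
    have e2 : R (DpiA T ρ σ h b) (DpiA T ρ σ h a) := ha b
    have e3 : R (DpiA T ρ σ h a) (DpiA T ρ τ h a) :=
      dpiA_rel hR henv hσ hτ hoptτ h a hatt hlt
    have d1 := isAttDist_DpiA henv hτ h b hatt hlt
    have d2 := isAttDist_DpiA henv hσ h b hatt hlt
    have d3 := isAttDist_DpiA henv hσ h a hatt hlt
    have d4 := isAttDist_DpiA henv hτ h a hatt hlt
    exact hR.2.1 _ _ _ d1 d2 d4 e1 (hR.2.1 _ _ _ d2 d3 d4 e2 e3)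
  exact Set.Subset.antisymm (key π π' hπ hπ' hopt hopt') (key π' π hπ' hπ hopt' hopt)
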